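/- arXiv:1605.07464 — 2 statements merged into one kernel-verified Lean document; each statement's English description precedes it below -/
import Mathlib

section
/- Let f ∈ L²(ℝ), ψ ∈ L¹∩L²(ℝ), and let χ ∈ L¹∩L²(ℝ) be a pointwise nonnegative real-valued function. Then for every δ ∈ ℝ, ‖ |f⋆ψ| ⋆ χ ‖₂ ≥ ‖ f⋆ψ⋆(χ·e^{2πiδ·}) ‖₂, where (χ·e^{2πiδ·})(t) = χ(t)e^{2πiδt}. -/
open MeasureTheory Real Complex FourierTransform

open scoped ENNReal

/-- Convolution of two functions on `ℝ`. -/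
noncomputable def conv (f g : ℝ → ℂ) : ℝ → ℂ := fun t => ∫ s, f s * g (t - s)

lemma young_meas {u k : ℝ → ℝ≥0∞} (hu : Measurable u) (hk : Measurable k) :
    ∫⁻ t, (∫⁻ s, u s * k (t - s)) ^ 2 ≤ (∫⁻ s, k s) ^ 2 * ∫⁻ s, u s ^ 2 := by
  have h22 : Real.HolderConjugate 2 2 := ⟨by norm_num, by norm_num, by norm_num⟩
  have hsub : ∀ t : ℝ, (∫⁻ s, k (t - s)) = ∫⁻ s, k s := fun t =>
    (Measure.measurePreserving_sub_left volume t).lintegral_comp hk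
  have e1 : ∀ x : ℝ≥0∞, x ^ ((2:ℝ)⁻¹) * x ^ ((2:ℝ)⁻¹) = x := by
    intro x
    rw [← sq, ← ENNReal.rpow_natCast (x ^ ((2:ℝ)⁻¹)) 2, ← ENNReal.rpow_mul]
    norm_num
  have e2 : ∀ x : ℝ≥0∞, (x ^ ((2:ℝ)⁻¹)) ^ (2:ℝ) = x := by
    intro x; rw [← ENNReal.rpow_mul]; norm_num
  have key : ∀ t : ℝ, (∫⁻ s, u s * k (t - s)) ^ 2
      ≤ (∫⁻ s, u s ^ 2 * k (t - s)) * ∫⁻ s, k s := by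
    intro t
    have hkt : Measurable fun s : ℝ => k (t - s) := hk.comp (measurable_const.sub measurable_id)
    have CS := ENNReal.lintegral_mul_le_Lp_mul_Lq (volume : Measure ℝ) h22
      (f := fun s => u s * k (t - s) ^ ((2:ℝ)⁻¹)) (g := fun s => k (t - s) ^ ((2:ℝ)⁻¹))
      ((hu.mul (hkt.pow_const _)).aemeasurable) ((hkt.pow_const _).aemeasurable)
    have A : (∫⁻ s, ((fun s => u s * k (t - s) ^ ((2:ℝ)⁻¹)) *
        fun s => k (t - s) ^ ((2:ℝ)⁻¹)) s) = ∫⁻ s, u s * k (t - s) :=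
      lintegral_congr fun s => by simp [mul_assoc, e1]
    have B : (∫⁻ s, (u s * k (t - s) ^ ((2:ℝ)⁻¹)) ^ (2:ℝ)) = ∫⁻ s, u s ^ 2 * k (t - s) := by
      refine lintegral_congr fun s => ?_
      rw [ENNReal.mul_rpow_of_nonneg _ _ (by norm_num), e2, ← ENNReal.rpow_natCast (u s) 2]
      norm_num
    have C : (∫⁻ s, (k (t - s) ^ ((2:ℝ)⁻¹)) ^ (2:ℝ)) = ∫⁻ s, k s := by
      rw [lintegral_congr fun s => e2 (k (t - s)), hsub]
    rw [A, B, C] at CS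
    calc (∫⁻ s, u s * k (t - s)) ^ 2
        ≤ ((∫⁻ s, u s ^ 2 * k (t - s)) ^ (1/(2:ℝ)) * (∫⁻ s, k s) ^ (1/(2:ℝ))) ^ 2 := by
          exact pow_le_pow_left' CS 2
      _ = (∫⁻ s, u s ^ 2 * k (t - s)) * ∫⁻ s, k s := by
          rw [mul_pow, ← ENNReal.rpow_natCast (_ ^ (1/(2:ℝ))) 2,
            ← ENNReal.rpow_natCast ((∫⁻ s, k s) ^ (1/(2:ℝ))) 2,
            ← ENNReal.rpow_mul, ← ENNReal.rpow_mul]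
          norm_num
  have hmeas : Measurable fun t : ℝ => ∫⁻ s, u s ^ 2 * k (t - s) := by
    have : Measurable (Function.uncurry fun t s : ℝ => u s ^ 2 * k (t - s)) :=
      ((hu.comp measurable_snd).pow_const 2).mul (hk.comp (measurable_fst.sub measurable_snd))
    exact this.lintegral_prod_right
  calc ∫⁻ t, (∫⁻ s, u s * k (t - s)) ^ 2
      ≤ ∫⁻ t, (∫⁻ s, u s ^ 2 * k (t - s)) * ∫⁻ s, k s := lintegral_mono key
    _ = (∫⁻ t, ∫⁻ s, u s ^ 2 * k (t - s)) * ∫⁻ s, k s := lintegral_mul_const _ hmeas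
    _ = (∫⁻ s, ∫⁻ t, u s ^ 2 * k (t - s)) * ∫⁻ s, k s := by
        rw [lintegral_lintegral_swap]
        exact (((hu.comp measurable_snd).pow_const 2).mul
          (hk.comp (measurable_fst.sub measurable_snd))).aemeasurable
    _ = (∫⁻ s, u s ^ 2 * ∫⁻ s, k s) * ∫⁻ s, k s := by
        congr 1
        refine lintegral_congr fun s => ?_
        have hks : Measurable fun t : ℝ => k (t - s) := hk.comp (measurable_sub_const s)
        rw [lintegral_const_mul _ hks, lintegral_sub_right_eq_self k s]
    _ = (∫⁻ s, k s) ^ 2 * ∫⁻ s, u s ^ 2 := by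
        rw [lintegral_mul_const _ ((hu.pow_const 2))]
        ring

lemma young_ae {u k : ℝ → ℝ≥0∞} (hu : AEMeasurable u volume) (hk : AEMeasurable k volume) :
    ∫⁻ t, (∫⁻ s, u s * k (t - s)) ^ 2 ≤ (∫⁻ s, k s) ^ 2 * ∫⁻ s, u s ^ 2 := by
  obtain ⟨u', hu'm, hu'⟩ := hu
  obtain ⟨k', hk'm, hk'⟩ := hk
  have hkt : ∀ t : ℝ, (fun s => k (t - s)) =ᵐ[volume] fun s => k' (t - s) := by
    intro t
    refine MeasureTheory.ae_eq_comp (μ := (volume : Measure ℝ)) (g := k) (g' := k')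
      (f := fun s : ℝ => t - s)
      ((Measure.measurePreserving_sub_left volume t).measurable.aemeasurable) ?_
    rwa [(Measure.measurePreserving_sub_left volume t).map_eq]
  have inner_eq : ∀ t : ℝ, (∫⁻ s, u s * k (t - s)) = ∫⁻ s, u' s * k' (t - s) := by
    intro t
    exact lintegral_congr_ae ((hu'.mul (hkt t)))
  have inner_eq2 : ∀ t : ℝ, (∫⁻ s, u s ^ 2) = ∫⁻ s, u' s ^ 2 :=
    fun t => lintegral_congr_ae (by filter_upwards [hu'] with s hs; rw [hs])
  calc ∫⁻ t, (∫⁻ s, u s * k (t - s)) ^ 2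
      = ∫⁻ t, (∫⁻ s, u' s * k' (t - s)) ^ 2 := by
        exact lintegral_congr fun t => by rw [inner_eq t]
    _ ≤ (∫⁻ s, k' s) ^ 2 * ∫⁻ s, u' s ^ 2 := young_meas hu'm hk'm
    _ = (∫⁻ s, k s) ^ 2 * ∫⁻ s, u s ^ 2 := by
        rw [lintegral_congr_ae hk', inner_eq2 0]

lemma aesm_conv {f g : ℝ → ℂ} (hf : AEStronglyMeasurable f volume)
    (hg : AEStronglyMeasurable g volume) : AEStronglyMeasurable (conv f g) volume := by
  have := (hf.convolution_integrand (ContinuousLinearMap.mul ℝ ℂ) hg).integral_prod_right'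
  simp only [ContinuousLinearMap.mul_apply'] at this
  exact this

lemma aesm_rconv {f g : ℝ → ℝ} (hf : AEStronglyMeasurable f volume)
    (hg : AEStronglyMeasurable g volume) :
    AEStronglyMeasurable (fun t => ∫ s, f s * g (t - s)) volume := by
  have := (hf.convolution_integrand (ContinuousLinearMap.mul ℝ ℝ) hg).integral_prod_right'
  simpa [ContinuousLinearMap.mul_apply'] using this

lemma ofReal_int_le (h : ℝ → ℝ) (hpos : ∀ s, 0 ≤ h s) :
    ENNReal.ofReal (∫ s, h s) ≤ ∫⁻ s, ENNReal.ofReal (h s) := by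
  by_cases hi : Integrable h
  · rw [MeasureTheory.ofReal_integral_eq_lintegral_ofReal hi (ae_of_all _ hpos)]
  · rw [integral_undef hi]; simp

lemma memL2_sq_lt_top {h : ℝ → ℂ} (hh : MeasureTheory.MemLp h 2) :
    ∫⁻ s, (‖h s‖₊ : ℝ≥0∞) ^ 2 < ⊤ := by
  have h2 := hh.2
  rw [MeasureTheory.eLpNorm_eq_lintegral_rpow_enorm_toReal (by norm_num) (by norm_num)] at h2
  simp only [enorm_eq_nnnorm] at h2
  by_contra hcon
  push_neg at hcon
  have htop : (∫⁻ s, (‖h s‖₊ : ℝ≥0∞) ^ ((2:ℝ≥0∞).toReal)) = ⊤ := by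
    rw [ENNReal.toReal_ofNat]
    rw [top_le_iff] at hcon
    rw [← hcon]
    exact lintegral_congr fun s => by
      rw [← ENNReal.rpow_natCast ((‖h s‖₊ : ℝ≥0∞)) 2]; norm_num
  rw [htop] at h2
  simp [ENNReal.top_rpow_of_pos] at h2


/-- For `f ∈ L²`, `ψ ∈ L¹ ∩ L²`, and a nonnegative `χ ∈ L¹ ∩ L²`,
for every `δ`, `‖ |f⋆ψ| ⋆ χ ‖₂ ≥ ‖ f ⋆ ψ ⋆ (χ·e^{2πiδ·}) ‖₂`
(stated via squared L² norms). -/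
theorem stmt0 (f ψ : ℝ → ℂ) (χ : ℝ → ℝ)
    (hf : MemLp f 2) (hψ1 : Integrable ψ) (hψ2 : MemLp ψ 2)
    (hχpos : ∀ t, 0 ≤ χ t) (hχ1 : Integrable χ) (hχ2 : MemLp χ 2) (δ : ℝ) :
    (∫ t, ‖conv (conv f ψ)
        (fun s => (χ s : ℂ) * Complex.exp (2 * π * δ * s * Complex.I)) t‖ ^ 2)
      ≤ ∫ t, ‖conv (fun s => (‖conv f ψ s‖ : ℂ)) (fun s => (χ s : ℂ)) t‖ ^ 2 := by
  set g : ℝ → ℂ := conv f ψ with hgdef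
  have hgm : AEStronglyMeasurable g volume :=
    aesm_conv hf.aestronglyMeasurable hψ2.aestronglyMeasurable
  set c : ℝ → ℝ := fun t => ∫ s, ‖g s‖ * χ (t - s) with hcdef
  have hc_nonneg : ∀ t, 0 ≤ c t := fun t =>
    integral_nonneg fun s => mul_nonneg (norm_nonneg _) (hχpos _)
  have hD : ∀ r : ℝ, ‖(χ r : ℂ) * Complex.exp (2 * π * δ * r * Complex.I)‖ = χ r := by
    intro r
    simp [Complex.norm_exp, _root_.abs_of_nonneg, hχpos r]
  have h1 : ∀ t, ‖conv g (fun s => (χ s : ℂ) * Complex.exp (2 * π * δ * s * Complex.I)) t‖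
      ≤ c t := by
    intro t
    refine le_trans (norm_integral_le_integral_norm _) (le_of_eq ?_)
    refine integral_congr_ae (Filter.Eventually.of_forall fun s => ?_)
    simp only [norm_mul, hD (t - s)]
  have h2 : ∀ t, conv (fun s => (‖g s‖ : ℂ)) (fun s => (χ s : ℂ)) t = ((c t : ℝ) : ℂ) := by
    intro t
    simp only [conv, hcdef]
    calc (∫ s, (‖g s‖ : ℂ) * (χ (t - s) : ℂ))
        = ∫ s, ((‖g s‖ * χ (t - s) : ℝ) : ℂ) := by
          refine integral_congr_ae (Filter.Eventually.of_forall fun s => ?_)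
          push_cast; ring
      _ = (((∫ s, ‖g s‖ * χ (t - s)) : ℝ) : ℂ) := integral_ofReal
  have hnorm2 : ∀ t, ‖conv (fun s => (‖g s‖ : ℂ)) (fun s => (χ s : ℂ)) t‖ = c t := by
    intro t
    rw [h2 t, Complex.norm_real, Real.norm_eq_abs, _root_.abs_of_nonneg (hc_nonneg t)]
  have hu : AEMeasurable (fun s => (‖g s‖₊ : ℝ≥0∞)) volume := hgm.enorm
  have hk : AEMeasurable (fun s => (‖χ s‖₊ : ℝ≥0∞)) volume := hχ1.aestronglyMeasurable.enorm
  have hgl2 : ∫⁻ s, (‖g s‖₊ : ℝ≥0∞) ^ 2 < ⊤ := by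
    have hb : ∀ t, (‖g t‖₊ : ℝ≥0∞) ≤ ∫⁻ s, (‖f s‖₊ : ℝ≥0∞) * (‖ψ (t - s)‖₊ : ℝ≥0∞) := by
      intro t
      refine le_trans (enorm_integral_le_lintegral_enorm _) (le_of_eq ?_)
      exact lintegral_congr fun s => by rw [enorm_eq_nnnorm, nnnorm_mul, ENNReal.coe_mul]
    calc ∫⁻ t, (‖g t‖₊ : ℝ≥0∞) ^ 2
        ≤ ∫⁻ t, (∫⁻ s, (‖f s‖₊ : ℝ≥0∞) * (‖ψ (t - s)‖₊ : ℝ≥0∞)) ^ 2 :=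
          lintegral_mono fun t => pow_le_pow_left' (hb t) 2
      _ ≤ (∫⁻ s, (‖ψ s‖₊ : ℝ≥0∞)) ^ 2 * ∫⁻ s, (‖f s‖₊ : ℝ≥0∞) ^ 2 :=
          young_ae hf.aestronglyMeasurable.enorm hψ1.aestronglyMeasurable.enorm
      _ < ⊤ := ENNReal.mul_lt_top (ENNReal.pow_lt_top hψ1.2) (memL2_sq_lt_top hf)
  have hofc : ∀ t, ENNReal.ofReal (c t) ≤ ∫⁻ s, (‖g s‖₊ : ℝ≥0∞) * (‖χ (t - s)‖₊ : ℝ≥0∞) := by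
    intro t
    refine le_trans (ofReal_int_le _ fun s => mul_nonneg (norm_nonneg _) (hχpos _)) (le_of_eq ?_)
    refine lintegral_congr fun s => ?_
    rw [ENNReal.ofReal_mul (norm_nonneg _), ofReal_norm_eq_enorm,
      ← Real.enorm_eq_ofReal (hχpos _)]
    rfl
  have hc2 : ∫⁻ t, ENNReal.ofReal (c t) ^ 2 < ⊤ := by
    calc ∫⁻ t, ENNReal.ofReal (c t) ^ 2
        ≤ ∫⁻ t, (∫⁻ s, (‖g s‖₊ : ℝ≥0∞) * (‖χ (t - s)‖₊ : ℝ≥0∞)) ^ 2 :=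
          lintegral_mono fun t => pow_le_pow_left' (hofc t) 2
      _ ≤ (∫⁻ s, (‖χ s‖₊ : ℝ≥0∞)) ^ 2 * ∫⁻ s, (‖g s‖₊ : ℝ≥0∞) ^ 2 := young_ae hu hk
      _ < ⊤ := ENNReal.mul_lt_top (ENNReal.pow_lt_top hχ1.2) hgl2
  have hcm : AEStronglyMeasurable c volume := aesm_rconv hgm.norm hχ1.aestronglyMeasurable
  have hci : Integrable (fun t => c t ^ 2) := by
    refine ⟨(hcm.mul hcm).congr (Filter.Eventually.of_forall fun t => (sq (c t)).symm), ?_⟩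
    have : ∀ t, (‖c t ^ 2‖₊ : ℝ≥0∞) = ENNReal.ofReal (c t) ^ 2 := by
      intro t
      rw [← enorm_eq_nnnorm, Real.enorm_eq_ofReal (pow_nonneg (hc_nonneg t) 2), ENNReal.ofReal_pow (hc_nonneg t)]
    refine lt_of_le_of_lt (le_of_eq (lintegral_congr fun t => this t)) hc2
  have h1sq : ∀ t, ‖conv g
      (fun s => (χ s : ℂ) * Complex.exp (2 * π * δ * s * Complex.I)) t‖ ^ 2 ≤ c t ^ 2 :=
    fun t => pow_le_pow_left₀ (norm_nonneg _) (h1 t) 2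
  calc (∫ t, ‖conv g (fun s => (χ s : ℂ) * Complex.exp (2 * π * δ * s * Complex.I)) t‖ ^ 2)
      ≤ ∫ t, c t ^ 2 := integral_mono_of_nonneg
        (Filter.Eventually.of_forall fun t => pow_nonneg (norm_nonneg _) 2) hci
        (Filter.Eventually.of_forall h1sq)
    _ = ∫ t, ‖conv (fun s => (‖g s‖ : ℂ)) (fun s => (χ s : ℂ)) t‖ ^ 2 := by
        refine integral_congr_ae (Filter.Eventually.of_forall fun t => ?_)
        simp only [hnorm2 t]
end

section
/- Let ψ ∈ L¹∩L²(ℝ) with ∫ψ = 0, let φ ∈ L¹∩L²(ℝ) with φ̂(0) = 1, and suppose the Littlewood–Paley identity ‖f⋆φ_J‖₂² + Σ_{j≤J}‖f⋆ψ_j‖₂² = ‖f‖₂² holds for all real-valued f ∈ L²(ℝ) and all J. Then for every n ≥ 0 and every real-valued f ∈ L²(ℝ): Σ_{p∈P_J, |p|<n} ‖S_J[p]f‖₂² + Σ_{p∈P_J, |p|=n} ‖U[p]f‖₂² = ‖f‖₂², where S_J[p]f = U[p]f⋆φ_J. In particular, Σ_{p∈P_J}‖S_J[p]f‖₂² = ‖f‖₂²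 if and only if Σ_{p∈P_J,|p|=n}‖U[p]f‖₂² → 0 as n → ∞. -/
open MeasureTheory Real Complex FourierTransform ENNReal Filter

/-- Dyadic dilation `g_j(t) = 2^{-j} g(2^{-j} t)`. -/
noncomputable def dil (g : ℝ → ℂ) (j : ℤ) : ℝ → ℂ :=
  fun t => ((2 : ℝ) ^ (-j) : ℝ) * g (((2 : ℝ) ^ (-j) : ℝ) * t)

/-- Scattering propagator: `U[∅]f = f`, `U[(j₁,…,jₘ)]f = |U[(j₁,…,j_{m−1})]f ⋆ ψ_{jₘ}|`. -/
noncomputable def scatU (ψ : ℝ → ℂ) (p : List ℤ) (f : ℝ → ℂ) : ℝ → ℂ :=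
  p.foldl (fun g j => fun t => (‖conv g (dil ψ j) t‖ : ℂ)) f

section Aux

lemma lintegral_sub_left' (f : ℝ → ℝ≥0∞) (t : ℝ) : ∫⁻ s, f (t - s) = ∫⁻ s, f s :=
  (Measure.measurePreserving_sub_left volume t).lintegral_comp_emb
    (MeasurableEquiv.subLeft t).measurableEmbedding f

lemma conv_congr_left {g g' : ℝ → ℂ} (k : ℝ → ℂ) (h : g =ᵐ[volume] g') :
    conv g k = conv g' k := by
  funext t
  exact integral_congr_ae (h.mono fun s hs => by simp only []; rw [hs])

lemma conv_congr_right (g : ℝ → ℂ) {k k' : ℝ → ℂ} (h : k =ᵐ[volume] k') :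
    conv g k = conv g k' := by
  funext t
  refine integral_congr_ae ?_
  have := (Measure.measurePreserving_sub_left volume t).quasiMeasurePreserving.ae_eq_comp h
  exact this.mono fun s hs => by simp only [Function.comp] at hs; simp only []; rw [hs]

lemma conv_memLp {g k : ℝ → ℂ} (hg : MemLp g 2) (hk : Integrable k) :
    MemLp (conv g k) 2 := by
  obtain ⟨hgm, hgfin⟩ := hg
  have hgg' : g =ᵐ[volume] hgm.mk g := hgm.ae_eq_mk
  have hkk' : k =ᵐ[volume] hk.1.mk k := hk.1.ae_eq_mk
  set g' := hgm.mk g with hg'def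
  set k' := hk.1.mk k with hk'def
  have hg'sm : StronglyMeasurable g' := hgm.stronglyMeasurable_mk
  have hk'sm : StronglyMeasurable k' := hk.1.stronglyMeasurable_mk
  have heq : conv g k = conv g' k' := by
    rw [conv_congr_left k hgg', conv_congr_right g' hkk']
  rw [heq]
  set a : ℝ → ℝ≥0∞ := fun s => (‖g' s‖₊ : ℝ≥0∞) with ha
  set b : ℝ → ℝ≥0∞ := fun s => (‖k' s‖₊ : ℝ≥0∞) with hb
  have ham : Measurable a := hg'sm.measurable.enorm
  have hbm : Measurable b := hk'sm.measurable.enorm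
  set K : ℝ≥0∞ := ∫⁻ s, b s with hKdef
  have hK : K < ⊤ := (hasFiniteIntegral_def _ _).mp (hk.congr hkk').2
  have hG2 : ∫⁻ s, a s ^ (2:ℝ) < ⊤ := by
    have hfin' : eLpNorm g' 2 volume < ⊤ := by
      rwa [eLpNorm_congr_ae hgg'] at hgfin
    have := lintegral_rpow_enorm_lt_top_of_eLpNorm_lt_top (f := g')
      (p := 2) two_ne_zero ENNReal.ofNat_ne_top hfin'
    simpa [a, enorm_eq_nnnorm] using this
  have hsm2 : StronglyMeasurable (fun p : ℝ × ℝ => g' p.2 * k' (p.1 - p.2)) :=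
    (hg'sm.comp_measurable measurable_snd).mul
      (hk'sm.comp_measurable (measurable_fst.sub measurable_snd))
  have hconvsm : StronglyMeasurable (conv g' k') := by
    have := StronglyMeasurable.integral_prod_right' (ν := (volume : Measure ℝ)) hsm2
    exact this
  have hmain : ∀ t, (‖conv g' k' t‖₊ : ℝ≥0∞) ^ (2:ℝ)
      ≤ (∫⁻ s, a s ^ (2:ℝ) * b (t - s)) * K := by
    intro t
    have h1 : (‖conv g' k' t‖₊ : ℝ≥0∞) ≤ ∫⁻ s, a s * b (t - s) := by
      refine le_trans (enorm_integral_le_lintegral_enorm _) (le_of_eq ?_)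
      refine lintegral_congr fun s => ?_
      simp [a, b, nnnorm_mul, ENNReal.coe_mul, enorm_eq_nnnorm]
    have h2 : (∫⁻ s, a s * b (t - s))
        ≤ ((∫⁻ s, a s ^ (2:ℝ) * b (t - s)) ^ ((1:ℝ)/2)) * (K ^ ((1:ℝ)/2)) := by
      have hH := ENNReal.lintegral_mul_le_Lp_mul_Lq volume
        (Real.HolderConjugate.two_two)
        (f := fun s => a s * b (t - s) ^ ((1:ℝ)/2))
        (g := fun s => b (t - s) ^ ((1:ℝ)/2))
        ((ham.mul ((hbm.comp (measurable_const.sub measurable_id)).pow_const _)).aemeasurable)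
        (((hbm.comp (measurable_const.sub measurable_id)).pow_const _).aemeasurable)
      have e1 : ∀ s : ℝ, (a s * b (t - s) ^ ((1:ℝ)/2)) * (b (t - s) ^ ((1:ℝ)/2))
          = a s * b (t - s) := by
        intro s
        rw [mul_assoc, ← ENNReal.rpow_add_of_nonneg ((1:ℝ)/2) ((1:ℝ)/2) (by norm_num) (by norm_num)]
        norm_num
      have e2 : ∀ s : ℝ, (a s * b (t - s) ^ ((1:ℝ)/2)) ^ (2:ℝ) = a s ^ (2:ℝ) * b (t - s) := by
        intro s
        rw [ENNReal.mul_rpow_of_nonneg _ _ (by norm_num : (0:ℝ) ≤ 2), ← ENNReal.rpow_mul]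
        norm_num
      have e3 : ∀ s : ℝ, (b (t - s) ^ ((1:ℝ)/2)) ^ (2:ℝ) = b (t - s) := by
        intro s; rw [← ENNReal.rpow_mul]; norm_num
      calc (∫⁻ s, a s * b (t - s))
          = ∫⁻ s, ((fun s => a s * b (t - s) ^ ((1:ℝ)/2)) * fun s => b (t - s) ^ ((1:ℝ)/2)) s := by
            refine lintegral_congr fun s => ?_
            simp only [Pi.mul_apply]
            rw [e1]
        _ ≤ (∫⁻ s, (a s * b (t - s) ^ ((1:ℝ)/2)) ^ (2:ℝ)) ^ ((1:ℝ)/2)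
              * (∫⁻ s, (b (t - s) ^ ((1:ℝ)/2)) ^ (2:ℝ)) ^ ((1:ℝ)/2) := hH
        _ = ((∫⁻ s, a s ^ (2:ℝ) * b (t - s)) ^ ((1:ℝ)/2)) * (K ^ ((1:ℝ)/2)) := by
            rw [lintegral_congr e2, lintegral_congr e3, hKdef, lintegral_sub_left' b t]
    calc (‖conv g' k' t‖₊ : ℝ≥0∞) ^ (2:ℝ)
        ≤ (((∫⁻ s, a s ^ (2:ℝ) * b (t - s)) ^ ((1:ℝ)/2)) * (K ^ ((1:ℝ)/2))) ^ (2:ℝ) :=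
          ENNReal.rpow_le_rpow (le_trans h1 h2) (by norm_num)
      _ = (∫⁻ s, a s ^ (2:ℝ) * b (t - s)) * K := by
          rw [ENNReal.mul_rpow_of_nonneg _ _ (by norm_num : (0:ℝ) ≤ 2),
            ← ENNReal.rpow_mul, ← ENNReal.rpow_mul]
          norm_num
  have hswap : ∫⁻ t, ∫⁻ s, a s ^ (2:ℝ) * b (t - s) = (∫⁻ s, a s ^ (2:ℝ)) * K := by
    rw [lintegral_lintegral_swap]
    · have : ∀ s : ℝ, ∫⁻ t, a s ^ (2:ℝ) * b (t - s) = a s ^ (2:ℝ) * K := by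
        intro s
        have hbs : Measurable fun t : ℝ => b (t - s) := by
          exact hbm.comp (measurable_id.sub measurable_const)
        rw [lintegral_const_mul _ hbs, hKdef, lintegral_sub_right_eq_self b s]
      rw [lintegral_congr this, lintegral_mul_const _ (ham.pow_const _)]
    · have hu : Measurable fun q : ℝ × ℝ => a q.2 ^ (2:ℝ) * b (q.1 - q.2) :=
        ((ham.pow_const (2:ℝ)).comp measurable_snd).mul
          (hbm.comp (measurable_fst.sub measurable_snd))
      exact hu.aemeasurable
  have hbound : ∫⁻ t, (‖conv g' k' t‖₊ : ℝ≥0∞) ^ (2:ℝ) ≤ ((∫⁻ s, a s ^ (2:ℝ)) * K) * K := by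
    calc ∫⁻ t, (‖conv g' k' t‖₊ : ℝ≥0∞) ^ (2:ℝ)
        ≤ ∫⁻ t, (∫⁻ s, a s ^ (2:ℝ) * b (t - s)) * K := lintegral_mono hmain
      _ = (∫⁻ t, ∫⁻ s, a s ^ (2:ℝ) * b (t - s)) * K := by
          have hu : Measurable fun q : ℝ × ℝ => a q.2 ^ (2:ℝ) * b (q.1 - q.2) :=
            ((ham.pow_const (2:ℝ)).comp measurable_snd).mul
              (hbm.comp (measurable_fst.sub measurable_snd))
          have hinner : Measurable fun t : ℝ => ∫⁻ s, a s ^ (2:ℝ) * b (t - s) :=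
            Measurable.lintegral_prod_right' (f := fun q : ℝ × ℝ => a q.2 ^ (2:ℝ) * b (q.1 - q.2)) hu
          rw [lintegral_mul_const _ hinner]
      _ = ((∫⁻ s, a s ^ (2:ℝ)) * K) * K := by rw [hswap]
  refine ⟨hconvsm.aestronglyMeasurable, ?_⟩
  rw [eLpNorm_lt_top_iff_lintegral_rpow_enorm_lt_top two_ne_zero ENNReal.ofNat_ne_top]
  refine lt_of_le_of_lt (le_of_eq ?_) (lt_of_le_of_lt hbound ?_)
  · simp [enorm_eq_nnnorm]
  · exact ENNReal.mul_lt_top (ENNReal.mul_lt_top hG2 hK) hK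

lemma dil_integrable {ψ : ℝ → ℂ} (hψ : Integrable ψ) (j : ℤ) : Integrable (dil ψ j) := by
  have hc : ((2:ℝ) ^ (-j) : ℝ) ≠ 0 := zpow_ne_zero _ two_ne_zero
  have h1 : Integrable fun t : ℝ => ψ (((2:ℝ) ^ (-j)) * t) := hψ.comp_mul_left' hc
  exact h1.const_mul _

lemma scatU_nil (ψ f : ℝ → ℂ) : scatU ψ [] f = f := rfl

lemma scatU_append (ψ f : ℝ → ℂ) (p : List ℤ) (j : ℤ) :
    scatU ψ (p ++ [j]) f = fun t => (‖conv (scatU ψ p f) (dil ψ j) t‖ : ℂ) := by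
  simp [scatU, List.foldl_append]

lemma memLp_norm_coe {h : ℝ → ℂ} (hh : MemLp h 2) :
    MemLp (fun t => (‖h t‖ : ℂ)) 2 := by
  refine ⟨Complex.continuous_ofReal.comp_aestronglyMeasurable hh.1.norm, ?_⟩
  have : eLpNorm (fun t => (‖h t‖ : ℂ)) 2 volume = eLpNorm h 2 volume :=
    eLpNorm_congr_norm_ae (Eventually.of_forall fun t => by simp)
  rw [this]; exact hh.2

/-- appending a scale to a path of length `n`. -/
def lenEquiv (J : ℤ) (n : ℕ) :
    ({p : List ℤ // p.length = n ∧ ∀ j ∈ p, j ≤ J} × {j : ℤ // j ≤ J}) ≃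
      {p : List ℤ // p.length = n + 1 ∧ ∀ j ∈ p, j ≤ J} where
  toFun x := ⟨x.1.1 ++ [x.2.1], by
    refine ⟨by simp [x.1.2.1], fun j hj => ?_⟩
    rcases List.mem_append.mp hj with h | h
    · exact x.1.2.2 j h
    · rw [List.mem_singleton] at h; subst h; exact x.2.2⟩
  invFun q :=
    have hne : q.1 ≠ [] := by
      intro h
      have := q.2.1
      rw [h] at this
      simp at this
    (⟨q.1.dropLast, by
        have hl := q.2.1
        constructor
        · simp [List.length_dropLast, hl]
        · exact fun j hj => q.2.2 j ((List.dropLast_sublist q.1).subset hj)⟩,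
     ⟨q.1.getLast hne, q.2.2 _ (List.getLast_mem hne)⟩)
  left_inv := by
    rintro ⟨⟨p, hp⟩, ⟨j, hj⟩⟩
    refine Prod.ext (Subtype.ext ?_) (Subtype.ext ?_)
    · simp
    · simp [List.getLast_append]
  right_inv := by
    rintro ⟨q, hq⟩
    exact Subtype.ext (List.dropLast_append_getLast _)

/-- paths graded by length. -/
def sigEquiv (J : ℤ) :
    {p : List ℤ // ∀ j ∈ p, j ≤ J} ≃
      Σ n : ℕ, {p : List ℤ // p.length = n ∧ ∀ j ∈ p, j ≤ J} where
  toFun p := ⟨p.1.length, ⟨p.1, rfl, p.2⟩⟩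
  invFun x := ⟨x.2.1, x.2.2.2⟩
  left_inv p := rfl
  right_inv := by rintro ⟨n, ⟨p, rfl, hQ⟩⟩; rfl

/-- paths of length `< n` graded by length. -/
def finEquiv (J : ℤ) (n : ℕ) :
    {p : List ℤ // p.length < n ∧ ∀ j ∈ p, j ≤ J} ≃
      Σ k : Fin n, {p : List ℤ // p.length = (k : ℕ) ∧ ∀ j ∈ p, j ≤ J} where
  toFun p := ⟨⟨p.1.length, p.2.1⟩, ⟨p.1, rfl, p.2.2⟩⟩
  invFun x := ⟨x.2.1, by rw [x.2.2.1]; exact x.1.2, x.2.2.2⟩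
  left_inv p := rfl
  right_inv := by
    rintro ⟨⟨k, hk⟩, ⟨p, hp, hQ⟩⟩
    simp only [Fin.val_mk] at hp
    subst hp
    rfl

end Aux


section Main

variable (ψ φ : ℝ → ℂ) (J : ℤ) (f : ℝ → ℂ)

/-- The `S`-coefficient of a path. -/
noncomputable def pSt (p : List ℤ) : ℝ≥0∞ :=
  ENNReal.ofReal (∫ t, ‖conv (scatU ψ p f) (dil φ J) t‖ ^ 2)

/-- The `U`-coefficient of a path. -/
noncomputable def pUt (p : List ℤ) : ℝ≥0∞ :=
  ENNReal.ofReal (∫ t, ‖scatU ψ p f t‖ ^ 2)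

/-- Layer sums of `S`-coefficients. -/
noncomputable def pC (n : ℕ) : ℝ≥0∞ :=
  ∑' p : {p : List ℤ // p.length = n ∧ ∀ j ∈ p, j ≤ J}, pSt ψ φ J f p.1

/-- Layer sums of `U`-coefficients. -/
noncomputable def pD (n : ℕ) : ℝ≥0∞ :=
  ∑' p : {p : List ℤ // p.length = n ∧ ∀ j ∈ p, j ≤ J}, pUt ψ f p.1

variable {ψ φ J f}

lemma scat_memLp (hψ1 : Integrable ψ) (hf : MemLp f 2) (hfreal : ∀ t, (f t).im = 0)
    (p : List ℤ) : MemLp (scatU ψ p f) 2 ∧ ∀ t, (scatU ψ p f t).im = 0 := by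
  induction p using List.reverseRecOn with
  | nil => exact ⟨hf, hfreal⟩
  | append_singleton p j ih =>
      rw [scatU_append]
      exact ⟨memLp_norm_coe (conv_memLp ih.1 (dil_integrable hψ1 j)), fun t => by simp⟩

lemma pstep (hψ1 : Integrable ψ)
    (hLPid : ∀ (f : ℝ → ℂ), MemLp f 2 → (∀ t, (f t).im = 0) → ∀ J : ℤ,
      ENNReal.ofReal (∫ t, ‖conv f (dil φ J) t‖ ^ 2)
          + ∑' j : {j : ℤ // j ≤ J}, ENNReal.ofReal (∫ t, ‖conv f (dil ψ j) t‖ ^ 2)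
        = ENNReal.ofReal (∫ t, ‖f t‖ ^ 2))
    (hf : MemLp f 2) (hfreal : ∀ t, (f t).im = 0) (p : List ℤ) :
    pSt ψ φ J f p + ∑' j : {j : ℤ // j ≤ J}, pUt ψ f (p ++ [j.1]) = pUt ψ f p := by
  have h := hLPid (scatU ψ p f) (scat_memLp hψ1 hf hfreal p).1
    (scat_memLp hψ1 hf hfreal p).2 J
  have hrw : ∀ j : {j : ℤ // j ≤ J},
      pUt ψ f (p ++ [j.1])
        = ENNReal.ofReal (∫ t, ‖conv (scatU ψ p f) (dil ψ j.1) t‖ ^ 2) := by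
    intro j
    have hpt : ∀ t, ‖scatU ψ (p ++ [j.1]) f t‖ = ‖conv (scatU ψ p f) (dil ψ j.1) t‖ := by
      intro t; rw [scatU_append]; simp
    unfold pUt
    simp only [hpt]
  rw [tsum_congr hrw]
  unfold pSt pUt
  exact h

lemma pD_succ (hψ1 : Integrable ψ)
    (hLPid : ∀ (f : ℝ → ℂ), MemLp f 2 → (∀ t, (f t).im = 0) → ∀ J : ℤ,
      ENNReal.ofReal (∫ t, ‖conv f (dil φ J) t‖ ^ 2)
          + ∑' j : {j : ℤ // j ≤ J}, ENNReal.ofReal (∫ t, ‖conv f (dil ψ j) t‖ ^ 2)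
        = ENNReal.ofReal (∫ t, ‖f t‖ ^ 2))
    (hf : MemLp f 2) (hfreal : ∀ t, (f t).im = 0) (n : ℕ) :
    pD ψ J f n = pC ψ φ J f n + pD ψ J f (n + 1) := by
  have h1 : pD ψ J f n = ∑' p : {p : List ℤ // p.length = n ∧ ∀ j ∈ p, j ≤ J},
      (pSt ψ φ J f p.1 + ∑' j : {j : ℤ // j ≤ J}, pUt ψ f (p.1 ++ [j.1])) :=
    tsum_congr fun p => (pstep hψ1 hLPid hf hfreal p.1).symm
  rw [h1, ENNReal.tsum_add]
  congr 1
  have h2 : ∑' p : {p : List ℤ // p.length = n ∧ ∀ j ∈ p, j ≤ J},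
        ∑' j : {j : ℤ // j ≤ J}, pUt ψ f (p.1 ++ [j.1])
      = ∑' x : ({p : List ℤ // p.length = n ∧ ∀ j ∈ p, j ≤ J} × {j : ℤ // j ≤ J}),
          pUt ψ f (x.1.1 ++ [x.2.1]) := (ENNReal.tsum_prod).symm
  rw [h2]
  exact (lenEquiv J n).tsum_eq (fun q => pUt ψ f q.1)

lemma pD_zero : pD ψ J f 0 = ENNReal.ofReal (∫ t, ‖f t‖ ^ 2) := by
  have huniq : ∀ p : {p : List ℤ // p.length = 0 ∧ ∀ j ∈ p, j ≤ J},
      p = ⟨[], by simp⟩ := by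
    rintro ⟨p, hp, hQ⟩
    exact Subtype.ext (List.length_eq_zero_iff.mp hp)
  have h1 : pD ψ J f 0 = pUt ψ f [] := by
    unfold pD
    exact tsum_eq_single
      (f := fun p : {p : List ℤ // p.length = 0 ∧ ∀ j ∈ p, j ≤ J} => pUt ψ f p.1)
      ⟨[], by simp⟩ (fun b hb => absurd (huniq b) hb)
  rw [h1]
  unfold pUt
  rw [scatU_nil]

lemma piden (hψ1 : Integrable ψ)
    (hLPid : ∀ (f : ℝ → ℂ), MemLp f 2 → (∀ t, (f t).im = 0) → ∀ J : ℤ,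
      ENNReal.ofReal (∫ t, ‖conv f (dil φ J) t‖ ^ 2)
          + ∑' j : {j : ℤ // j ≤ J}, ENNReal.ofReal (∫ t, ‖conv f (dil ψ j) t‖ ^ 2)
        = ENNReal.ofReal (∫ t, ‖f t‖ ^ 2))
    (hf : MemLp f 2) (hfreal : ∀ t, (f t).im = 0) (n : ℕ) :
    (∑ k ∈ Finset.range n, pC ψ φ J f k) + pD ψ J f n
      = ENNReal.ofReal (∫ t, ‖f t‖ ^ 2) := by
  induction n with
  | zero => simpa using pD_zero (ψ := ψ) (J := J) (f := f)
  | succ n ih =>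
      rw [Finset.sum_range_succ]
      calc (∑ k ∈ Finset.range n, pC ψ φ J f k) + pC ψ φ J f n + pD ψ J f (n + 1)
          = (∑ k ∈ Finset.range n, pC ψ φ J f k)
              + (pC ψ φ J f n + pD ψ J f (n + 1)) := by rw [add_assoc]
        _ = (∑ k ∈ Finset.range n, pC ψ φ J f k) + pD ψ J f n := by
            rw [← pD_succ hψ1 hLPid hf hfreal n]
        _ = _ := ih

lemma pA_eq (n : ℕ) :
    (∑' p : {p : List ℤ // p.length < n ∧ ∀ j ∈ p, j ≤ J}, pSt ψ φ J f p.1)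
      = ∑ k ∈ Finset.range n, pC ψ φ J f k := by
  have h1 : ∑' x : (Σ k : Fin n, {p : List ℤ // p.length = (k : ℕ) ∧ ∀ j ∈ p, j ≤ J}),
      pSt ψ φ J f (((finEquiv J n).symm x).1)
      = ∑' p : {p : List ℤ // p.length < n ∧ ∀ j ∈ p, j ≤ J}, pSt ψ φ J f p.1 :=
    (finEquiv J n).symm.tsum_eq (fun p => pSt ψ φ J f p.1)
  rw [← h1, ENNReal.tsum_sigma', tsum_fintype,
    ← Fin.sum_univ_eq_sum_range (fun k => pC ψ φ J f k) n]
  rfl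

lemma pT_eq :
    (∑' p : {p : List ℤ // ∀ j ∈ p, j ≤ J}, pSt ψ φ J f p.1) = ∑' k, pC ψ φ J f k := by
  have h1 : ∑' x : (Σ k : ℕ, {p : List ℤ // p.length = k ∧ ∀ j ∈ p, j ≤ J}),
      pSt ψ φ J f (((sigEquiv J).symm x).1)
      = ∑' p : {p : List ℤ // ∀ j ∈ p, j ≤ J}, pSt ψ φ J f p.1 :=
    (sigEquiv J).symm.tsum_eq (fun p => pSt ψ φ J f p.1)
  rw [← h1, ENNReal.tsum_sigma']
  rfl

end Main

/-- If the Littlewood–Paley identity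
`‖f⋆φ_J‖₂² + Σ_{j≤J}‖f⋆ψ_j‖₂² = ‖f‖₂²` holds for all real `f ∈ L²` and all `J`, then for
every `n` and real `f ∈ L²`,
`Σ_{|p|<n}‖S_J[p]f‖₂² + Σ_{|p|=n}‖U[p]f‖₂² = ‖f‖₂²`; in particular
`Σ_{p∈P_J}‖S_J[p]f‖₂² = ‖f‖₂²` iff `Σ_{|p|=n}‖U[p]f‖₂² → 0`. -/
theorem stmt18 (ψ : ℝ → ℂ) (hψ1 : Integrable ψ) (hψ2 : MemLp ψ 2)
    (hψ0 : ∫ t, ψ t = 0)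
    (φ : ℝ → ℂ) (hφ1 : Integrable φ) (hφ2 : MemLp φ 2) (hφ0 : 𝓕 φ 0 = 1)
    (hLPid : ∀ (f : ℝ → ℂ), MemLp f 2 → (∀ t, (f t).im = 0) → ∀ J : ℤ,
      ENNReal.ofReal (∫ t, ‖conv f (dil φ J) t‖ ^ 2)
          + ∑' j : {j : ℤ // j ≤ J}, ENNReal.ofReal (∫ t, ‖conv f (dil ψ j) t‖ ^ 2)
        = ENNReal.ofReal (∫ t, ‖f t‖ ^ 2))
    (J : ℤ) (f : ℝ → ℂ) (hf : MemLp f 2) (hfreal : ∀ t, (f t).im = 0) :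
    (∀ n : ℕ,
      (∑' p : {p : List ℤ // p.length < n ∧ ∀ j ∈ p, j ≤ J},
          ENNReal.ofReal (∫ t, ‖conv (scatU ψ p f) (dil φ J) t‖ ^ 2))
        + (∑' p : {p : List ℤ // p.length = n ∧ ∀ j ∈ p, j ≤ J},
            ENNReal.ofReal (∫ t, ‖scatU ψ p f t‖ ^ 2))
      = ENNReal.ofReal (∫ t, ‖f t‖ ^ 2))
    ∧ ((∑' p : {p : List ℤ // ∀ j ∈ p, j ≤ J},
          ENNReal.ofReal (∫ t, ‖conv (scatU ψ p f) (dil φ J) t‖ ^ 2))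
          = ENNReal.ofReal (∫ t, ‖f t‖ ^ 2)
        ↔ Tendsto (fun n : ℕ =>
            ∑' p : {p : List ℤ // p.length = n ∧ ∀ j ∈ p, j ≤ J},
              ENNReal.ofReal (∫ t, ‖scatU ψ p f t‖ ^ 2)) atTop (nhds 0)) := by
  have hEne : ENNReal.ofReal (∫ t, ‖f t‖ ^ 2) ≠ ⊤ := ENNReal.ofReal_ne_top
  have hiden := piden (J := J) hψ1 hLPid hf hfreal
  have hSfin : ∀ n, (∑ k ∈ Finset.range n, pC ψ φ J f k) ≠ ⊤ := by
    intro n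
    refine ne_top_of_le_ne_top hEne ?_
    rw [← hiden n]; exact le_self_add
  have hDfin : ∀ n, pD ψ J f n ≠ ⊤ := by
    intro n
    refine ne_top_of_le_ne_top hEne ?_
    rw [← hiden n]; exact le_add_self
  have hBD : ∀ n : ℕ, (∑' p : {p : List ℤ // p.length = n ∧ ∀ j ∈ p, j ≤ J},
      ENNReal.ofReal (∫ t, ‖scatU ψ (p : List ℤ) f t‖ ^ 2)) = pD ψ J f n := fun n => rfl
  constructor
  · intro n
    have := hiden n
    rw [← pA_eq (ψ := ψ) (φ := φ) (J := J) (f := f) n] at this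
    exact this
  · rw [show (∑' p : {p : List ℤ // ∀ j ∈ p, j ≤ J},
        ENNReal.ofReal (∫ t, ‖conv (scatU ψ (p : List ℤ) f) (dil φ J) t‖ ^ 2))
        = ∑' p : {p : List ℤ // ∀ j ∈ p, j ≤ J}, pSt ψ φ J f p.1 from rfl,
      pT_eq (ψ := ψ) (φ := φ) (J := J) (f := f)]
    simp only [hBD]
    have hCS : Tendsto (fun n => ∑ k ∈ Finset.range n, pC ψ φ J f k) atTop
        (nhds (∑' k, pC ψ φ J f k)) := ENNReal.tendsto_nat_tsum _
    constructor
    · intro hsum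
      have hDn : ∀ n, pD ψ J f n
          = ENNReal.ofReal (∫ t, ‖f t‖ ^ 2) - ∑ k ∈ Finset.range n, pC ψ φ J f k := by
        intro n
        exact ENNReal.eq_sub_of_add_eq (hSfin n) (by rw [add_comm]; exact hiden n)
      have hlim : Tendsto (fun n => ENNReal.ofReal (∫ t, ‖f t‖ ^ 2)
          - ∑ k ∈ Finset.range n, pC ψ φ J f k) atTop
          (nhds (ENNReal.ofReal (∫ t, ‖f t‖ ^ 2) - ENNReal.ofReal (∫ t, ‖f t‖ ^ 2))) := by
        refine ENNReal.Tendsto.sub tendsto_const_nhds ?_ (Or.inl hEne)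
        rwa [hsum] at hCS
      rw [tsub_self] at hlim
      exact (funext hDn : (fun n => pD ψ J f n) = _) ▸ hlim
    · intro hzero
      have hSn : ∀ n, (∑ k ∈ Finset.range n, pC ψ φ J f k)
          = ENNReal.ofReal (∫ t, ‖f t‖ ^ 2) - pD ψ J f n := by
        intro n
        exact ENNReal.eq_sub_of_add_eq (hDfin n) (hiden n)
      have hlim : Tendsto (fun n => ENNReal.ofReal (∫ t, ‖f t‖ ^ 2) - pD ψ J f n) atTop
          (nhds (ENNReal.ofReal (∫ t, ‖f t‖ ^ 2) - 0)) :=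
        ENNReal.Tendsto.sub tendsto_const_nhds hzero (Or.inl hEne)
      rw [tsub_zero] at hlim
      have h2 : Tendsto (fun n => ∑ k ∈ Finset.range n, pC ψ φ J f k) atTop
          (nhds (ENNReal.ofReal (∫ t, ‖f t‖ ^ 2))) := by
        simpa only [hSn] using hlim
      exact tendsto_nhds_unique hCS h2
end
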